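/- arXiv:1901.10151 — 5 statements merged into one kernel-verified Lean document; each statement's English description precedes it below -/
import Mathlib

section
/- The function f(x) = (1/m)∑_{i=1}^m min_{j=1,…,k} ‖aⁱ − xʲ‖² attains its global minimum on ℝ^{n×k}, i.e., the unconstrained MSSC problem always has a global solution. -/
open Finset Metric

/-- Retraction onto a closed ball does not increase distances to points of the ball. -/
lemma proj_key {E : Type*} [NormedAddCommGroup E] [InnerProductSpace ℝ E]
    {R : ℝ} (a z : E) (ha : ‖a‖ ≤ R) :
    ‖a - (if ‖z‖ ≤ R then z else (R / ‖z‖) • z)‖ ≤ ‖a - z‖ := by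
  split_ifs with h
  · exact le_rfl
  · push_neg at h
    have hz : 0 < ‖z‖ := lt_of_le_of_lt (norm_nonneg a |>.trans ha) h
    set t : ℝ := R / ‖z‖ with ht
    have ht0 : 0 ≤ t := div_nonneg ((norm_nonneg a).trans ha) hz.le
    have ht1 : t < 1 := (div_lt_one hz).2 h
    have htz : t * ‖z‖ = R := div_mul_cancel₀ R hz.ne'
    have hsq : ‖a - t • z‖ ^ 2 ≤ ‖a - z‖ ^ 2 := by
      have e1 : ‖a - t • z‖ ^ 2 = ‖a‖^2 - 2 * (t * inner ℝ a z) + t^2 * ‖z‖^2 := by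
        rw [norm_sub_sq_real, real_inner_smul_right, norm_smul]
        simp only [mul_pow, norm_smul, Real.norm_eq_abs, abs_of_nonneg ht0]
      have e2 : ‖a - z‖ ^ 2 = ‖a‖^2 - 2 * inner ℝ a z + ‖z‖^2 := by
        rw [norm_sub_sq_real]
      have hip : (inner ℝ a z : ℝ) ≤ ‖a‖ * ‖z‖ := real_inner_le_norm a z
      nlinarith [norm_nonneg a, sq_nonneg (‖z‖ - R)]
    exact (pow_le_pow_iff_left₀ (norm_nonneg _) (norm_nonneg _) two_ne_zero).1 hsq

/-- The objective of the unconstrained MSSC problem. -/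
noncomputable def msscF {n m k : ℕ} [NeZero k] (a : Fin m → EuclideanSpace ℝ (Fin n))
    (x : Fin k → EuclideanSpace ℝ (Fin n)) : ℝ :=
  (1 / (m : ℝ)) * ∑ i, (Finset.univ.inf' Finset.univ_nonempty fun j => ‖a i - x j‖ ^ 2)

/-- The unconstrained MSSC problem always has a global solution. -/
theorem stmt2 {n m k : ℕ} [NeZero k] (hk : k ≤ m)
    (a : Fin m → EuclideanSpace ℝ (Fin n)) :
    ∃ xbar : Fin k → EuclideanSpace ℝ (Fin n),
      ∀ x : Fin k → EuclideanSpace ℝ (Fin n), msscF a xbar ≤ msscF a x := by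
  classical
  have hcont : Continuous (msscF (k := k) a) := by
    unfold msscF
    refine continuous_const.mul (continuous_finset_sum _ fun i _ => ?_)
    exact Continuous.finset_inf'_apply Finset.univ_nonempty fun j _ =>
      ((continuous_const.sub (continuous_apply j)).norm.pow 2)
  set R : ℝ := ∑ i, ‖a i‖ with hRdef
  have hR0 : 0 ≤ R := Finset.sum_nonneg fun i _ => norm_nonneg _
  have hRa : ∀ i, ‖a i‖ ≤ R :=
    fun i => Finset.single_le_sum (fun j _ => norm_nonneg (a j)) (Finset.mem_univ i)
  set P : EuclideanSpace ℝ (Fin n) → EuclideanSpace ℝ (Fin n) :=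
    fun z => if ‖z‖ ≤ R then z else (R / ‖z‖) • z with hP
  have hPball : ∀ z, ‖P z‖ ≤ R := by
    intro z
    simp only [hP]
    split_ifs with h
    · exact h
    · push_neg at h
      have hz : 0 < ‖z‖ := hR0.trans_lt h
      rw [norm_smul, Real.norm_eq_abs, abs_of_nonneg (div_nonneg hR0 hz.le),
        div_mul_cancel₀ R hz.ne']
  have hKcpt : IsCompact
      (Set.pi Set.univ fun _ : Fin k => closedBall (0 : EuclideanSpace ℝ (Fin n)) R) :=
    isCompact_univ_pi fun _ => isCompact_closedBall 0 R
  have hKne : (fun _ : Fin k => (0 : EuclideanSpace ℝ (Fin n))) ∈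
      Set.pi Set.univ fun _ : Fin k => closedBall (0 : EuclideanSpace ℝ (Fin n)) R := by
    intro j _; simpa using hR0
  obtain ⟨xbar, hxbarK, hmin⟩ := hKcpt.exists_isMinOn ⟨_, hKne⟩ hcont.continuousOn
  refine ⟨xbar, fun x => ?_⟩
  have hPx : (fun j => P (x j)) ∈
      Set.pi Set.univ fun _ : Fin k => closedBall (0 : EuclideanSpace ℝ (Fin n)) R := by
    intro j _; simpa using hPball (x j)
  refine (hmin hPx).trans ?_
  unfold msscF
  refine mul_le_mul_of_nonneg_left (Finset.sum_le_sum fun i _ => ?_) (by positivity)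
  refine Finset.le_inf' _ _ fun j _ => ?_
  refine (Finset.inf'_le _ (Finset.mem_univ j)).trans ?_
  exact pow_le_pow_left₀ (norm_nonneg _) (proj_key (a i) (x j) (hRa i)) 2
end

section
/- If the data points a¹,…,aᵐ are pairwise distinct, then the set of global solutions of the unconstrained MSSC problem min f(x) = (1/m)∑_i min_j ‖aⁱ − xʲ‖² is finite. -/
open Finset RealInnerProductSpace

lemma centroid_split {ι : Type*} {E : Type*} [NormedAddCommGroup E] [InnerProductSpace ℝ E]
    (a : ι → E) (S : Finset ι) (hS : S.Nonempty) (y : E) :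
    ∑ i ∈ S, ‖a i - y‖ ^ 2 =
      ∑ i ∈ S, ‖a i - ((S.card : ℝ)⁻¹ • ∑ i ∈ S, a i)‖ ^ 2 +
        S.card * ‖y - ((S.card : ℝ)⁻¹ • ∑ i ∈ S, a i)‖ ^ 2 := by
  set c : E := (S.card : ℝ)⁻¹ • ∑ i ∈ S, a i with hc
  have hcard : (S.card : ℝ) ≠ 0 := by
    exact_mod_cast (Finset.card_pos.mpr hS).ne'
  have hsum : (S.card : ℝ) • c = ∑ i ∈ S, a i := by
    rw [hc, smul_smul, mul_inv_cancel₀ hcard, one_smul]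
  have hzero : ∑ i ∈ S, (a i - c) = 0 := by
    rw [Finset.sum_sub_distrib, Finset.sum_const, ← Nat.cast_smul_eq_nsmul ℝ, hsum, sub_self]
  have hterm : ∀ i, ‖a i - y‖ ^ 2 = ‖a i - c‖ ^ 2 + 2 * ⟪a i - c, c - y⟫ + ‖c - y‖ ^ 2 := by
    intro i
    have : a i - y = (a i - c) + (c - y) := by abel
    rw [this, norm_add_sq_real]
  calc ∑ i ∈ S, ‖a i - y‖ ^ 2
      = ∑ i ∈ S, (‖a i - c‖ ^ 2 + 2 * ⟪a i - c, c - y⟫ + ‖c - y‖ ^ 2) := by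
        exact Finset.sum_congr rfl fun i _ => hterm i
    _ = ∑ i ∈ S, ‖a i - c‖ ^ 2 + 2 * ⟪∑ i ∈ S, (a i - c), c - y⟫ + S.card * ‖c - y‖ ^ 2 := by
        rw [Finset.sum_add_distrib, Finset.sum_add_distrib, sum_inner, Finset.sum_const,
          ← Finset.mul_sum, nsmul_eq_mul]
    _ = ∑ i ∈ S, ‖a i - c‖ ^ 2 + S.card * ‖y - c‖ ^ 2 := by
        rw [hzero, inner_zero_left, norm_sub_rev]
        ring


/-- If the data points are pairwise distinct, then the set of global solutions of the
unconstrained MSSC problem is finite. -/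
theorem stmt3 {n m k : ℕ} [NeZero k] (hk : k ≤ m)
    (a : Fin m → EuclideanSpace ℝ (Fin n)) (ha : Function.Injective a) :
    {xbar : Fin k → EuclideanSpace ℝ (Fin n) |
      ∀ x : Fin k → EuclideanSpace ℝ (Fin n), msscF a xbar ≤ msscF a x}.Finite := by
  have hm : 0 < m := lt_of_lt_of_le (NeZero.pos k) hk
  apply Set.Finite.subset (Set.finite_range (fun σ : Fin m → Fin k => fun j =>
    ((Finset.univ.filter (fun i => σ i = j)).card : ℝ)⁻¹ •
      ∑ i ∈ Finset.univ.filter (fun i => σ i = j), a i))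
  intro xbar hxbar
  simp only [Set.mem_setOf_eq] at hxbar
  -- sums version of optimality
  have hmain : ∀ x : Fin k → EuclideanSpace ℝ (Fin n),
      ∑ i, (Finset.univ.inf' Finset.univ_nonempty fun j => ‖a i - xbar j‖ ^ 2) ≤
      ∑ i, (Finset.univ.inf' Finset.univ_nonempty fun j => ‖a i - x j‖ ^ 2) := by
    intro x
    have := hxbar x
    unfold msscF at this
    have hpos : 0 < 1 / (m : ℝ) := by positivity
    exact le_of_mul_le_mul_left (by linarith [this]) hpos
  -- argmin selection
  have hsel : ∀ i : Fin m, ∃ j : Fin k,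
      (Finset.univ.inf' Finset.univ_nonempty fun j => ‖a i - xbar j‖ ^ 2) = ‖a i - xbar j‖ ^ 2 := by
    intro i
    obtain ⟨j, _, hj⟩ := Finset.exists_mem_eq_inf' Finset.univ_nonempty
      (fun j => ‖a i - xbar j‖ ^ 2)
    exact ⟨j, hj⟩
  choose σ hσ using hsel
  have hσle : ∀ (i : Fin m) (j : Fin k), ‖a i - xbar (σ i)‖ ^ 2 ≤ ‖a i - xbar j‖ ^ 2 := by
    intro i j
    rw [← hσ i]
    exact Finset.inf'_le _ (Finset.mem_univ j)
  -- every cluster is nonempty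
  have hne : ∀ j : Fin k, (Finset.univ.filter (fun i => σ i = j)).Nonempty := by
    intro j0
    by_contra hempty
    rw [Finset.not_nonempty_iff_eq_empty] at hempty
    have hnej : ∀ i, σ i ≠ j0 := by
      intro i h
      have hi : i ∈ Finset.univ.filter (fun i => σ i = j0) := by simp [h]
      rw [hempty] at hi
      exact absurd hi (Finset.notMem_empty i)
    have key : ∀ i0 : Fin m, 0 < ‖a i0 - xbar (σ i0)‖ ^ 2 → False := by
      intro i0 hpos
      set x' := Function.update xbar j0 (a i0) with hx'
      have hlt : ∑ i, (Finset.univ.inf' Finset.univ_nonempty fun j => ‖a i - x' j‖ ^ 2) <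
          ∑ i, (Finset.univ.inf' Finset.univ_nonempty fun j => ‖a i - xbar j‖ ^ 2) := by
        apply Finset.sum_lt_sum
        · intro i _
          calc (Finset.univ.inf' Finset.univ_nonempty fun j => ‖a i - x' j‖ ^ 2)
              ≤ ‖a i - x' (σ i)‖ ^ 2 := Finset.inf'_le _ (Finset.mem_univ _)
            _ = ‖a i - xbar (σ i)‖ ^ 2 := by rw [hx', Function.update_of_ne (hnej i)]
            _ = _ := (hσ i).symm
        · refine ⟨i0, Finset.mem_univ _, ?_⟩
          have h1 : (Finset.univ.inf' Finset.univ_nonempty fun j => ‖a i0 - x' j‖ ^ 2)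
              ≤ ‖a i0 - x' j0‖ ^ 2 := Finset.inf'_le _ (Finset.mem_univ _)
          have h2 : x' j0 = a i0 := Function.update_self _ _ _
          rw [h2, sub_self, norm_zero] at h1
          rw [hσ i0]
          calc (Finset.univ.inf' Finset.univ_nonempty fun j => ‖a i0 - x' j‖ ^ 2)
              ≤ 0 := by simpa using h1
            _ < _ := hpos
      exact absurd (hmain x') (not_le.mpr hlt)
    have hcard : (Finset.univ.erase j0).card < (Finset.univ : Finset (Fin m)).card := by
      rw [Finset.card_erase_of_mem (Finset.mem_univ j0), Finset.card_univ, Finset.card_univ,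
        Fintype.card_fin, Fintype.card_fin]
      exact lt_of_lt_of_le (Nat.sub_lt (NeZero.pos k) one_pos) hk
    obtain ⟨i1, -, i2, -, hne12, heq⟩ :=
      Finset.exists_ne_map_eq_of_card_lt_of_maps_to hcard
        (fun i _ => Finset.mem_erase.mpr ⟨hnej i, Finset.mem_univ (σ i)⟩)
    by_cases hcase : xbar (σ i1) = a i1
    · apply key i2
      have : a i2 - xbar (σ i2) ≠ 0 := by
        rw [← heq, hcase, sub_ne_zero]
        exact fun h => hne12 (ha h).symm
      exact pow_pos (norm_pos_iff.mpr this) 2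
    · apply key i1
      have : a i1 - xbar (σ i1) ≠ 0 := by
        rw [sub_ne_zero]
        exact fun h => hcase h.symm
      exact pow_pos (norm_pos_iff.mpr this) 2
  -- xbar j is the centroid of cluster j
  have hcent : ∀ j : Fin k, xbar j =
      ((Finset.univ.filter (fun i => σ i = j)).card : ℝ)⁻¹ •
        ∑ i ∈ Finset.univ.filter (fun i => σ i = j), a i := by
    set c : Fin k → EuclideanSpace ℝ (Fin n) := fun j =>
      ((Finset.univ.filter (fun i => σ i = j)).card : ℝ)⁻¹ •
        ∑ i ∈ Finset.univ.filter (fun i => σ i = j), a i with hc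
    have hfib : ∀ y : Fin k → EuclideanSpace ℝ (Fin n),
        ∑ j, ∑ i ∈ Finset.univ.filter (fun i => σ i = j), ‖a i - y j‖ ^ 2 =
          ∑ i, ‖a i - y (σ i)‖ ^ 2 := by
      intro y
      rw [← Finset.sum_fiberwise Finset.univ σ (fun i => ‖a i - y (σ i)‖ ^ 2)]
      exact Finset.sum_congr rfl fun j _ => Finset.sum_congr rfl fun i hi => by
        rw [(Finset.mem_filter.mp hi).2]
    have hA : ∀ j : Fin k, ∑ i ∈ Finset.univ.filter (fun i => σ i = j), ‖a i - xbar j‖ ^ 2 =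
        ∑ i ∈ Finset.univ.filter (fun i => σ i = j), ‖a i - c j‖ ^ 2 +
          (Finset.univ.filter (fun i => σ i = j)).card * ‖xbar j - c j‖ ^ 2 := fun j =>
      centroid_split a _ (hne j) _
    have hchain : ∑ j, (∑ i ∈ Finset.univ.filter (fun i => σ i = j), ‖a i - c j‖ ^ 2 +
          (Finset.univ.filter (fun i => σ i = j)).card * ‖xbar j - c j‖ ^ 2) ≤
        ∑ j, ∑ i ∈ Finset.univ.filter (fun i => σ i = j), ‖a i - c j‖ ^ 2 := by
      calc _ = ∑ j, ∑ i ∈ Finset.univ.filter (fun i => σ i = j), ‖a i - xbar j‖ ^ 2 :=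
            (Finset.sum_congr rfl fun j _ => (hA j).symm)
        _ = ∑ i, ‖a i - xbar (σ i)‖ ^ 2 := hfib xbar
        _ = ∑ i, (Finset.univ.inf' Finset.univ_nonempty fun j => ‖a i - xbar j‖ ^ 2) :=
            (Finset.sum_congr rfl fun i _ => (hσ i).symm)
        _ ≤ ∑ i, (Finset.univ.inf' Finset.univ_nonempty fun j => ‖a i - c j‖ ^ 2) := hmain c
        _ ≤ ∑ i, ‖a i - c (σ i)‖ ^ 2 :=
            Finset.sum_le_sum fun i _ => Finset.inf'_le _ (Finset.mem_univ _)
        _ = _ := (hfib c).symm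
    rw [Finset.sum_add_distrib] at hchain
    have hsum0 : ∑ j, ((Finset.univ.filter (fun i => σ i = j)).card : ℝ) * ‖xbar j - c j‖ ^ 2
        = 0 := by
      refine le_antisymm (by linarith) (Finset.sum_nonneg fun j _ => by positivity)
    have hterm0 := (Finset.sum_eq_zero_iff_of_nonneg (fun j _ => by positivity)).mp hsum0
    intro j
    have h0 := hterm0 j (Finset.mem_univ j)
    have hcardpos : (0 : ℝ) < (Finset.univ.filter (fun i => σ i = j)).card := by
      exact_mod_cast Finset.card_pos.mpr (hne j)
    have : ‖xbar j - c j‖ ^ 2 = 0 := by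
      rcases mul_eq_zero.mp h0 with h | h
      · exact absurd h hcardpos.ne'
      · exact h
    have : xbar j - c j = 0 := by
      rwa [pow_eq_zero_iff two_ne_zero, norm_eq_zero] at this
    rw [sub_eq_zero] at this
    exact this
  exact ⟨σ, (funext fun j => (hcent j).symm)⟩
end

section
/- Assume a¹,…,aᵐ are pairwise distinct and x̄ = (x̄¹,…,x̄ᵏ) is a global solution of the unconstrained MSSC problem. Then for every j ∈ {1,…,k} the attraction set A[x̄ʲ] = {aⁱ : ‖aⁱ − x̄ʲ‖ = min_q ‖aⁱ − x̄^q‖} is nonempty, and x̄ʲ = (1/|I(j)|) ∑_{i∈I(j)} aⁱ where I(j) = {i : aⁱ ∈ A[x̄ʲ]}. -/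
lemma inf'_sq {ι : Type*} (s : Finset ι) (hs : s.Nonempty) (f : ι → ℝ)
    (hf : ∀ i ∈ s, 0 ≤ f i) :
    (s.inf' hs fun i => f i ^ 2) = (s.inf' hs f) ^ 2 := by
  obtain ⟨i0, hi0, h0⟩ := s.exists_mem_eq_inf' hs f
  refine le_antisymm (le_trans (s.inf'_le _ hi0) (by rw [h0])) ?_
  refine Finset.le_inf' _ _ fun i hi => ?_
  exact pow_le_pow_left₀ (h0 ▸ hf i0 hi0) (s.inf'_le f hi) 2

lemma sum_dist_sq_mean {ι : Type*} {E : Type*} [NormedAddCommGroup E]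
    [InnerProductSpace ℝ E] (S : Finset ι) (f : ι → E) (c b : E)
    (hb : (S.card : ℝ) • b = ∑ i ∈ S, f i) :
    ∑ i ∈ S, ‖f i - b‖ ^ 2 = (∑ i ∈ S, ‖f i - c‖ ^ 2) - S.card * ‖c - b‖ ^ 2 := by
  have expand : ∀ i, ‖f i - b‖^2
      = ‖f i - c‖^2 + 2 * (inner ℝ (f i - c) (c - b) : ℝ) + ‖c - b‖^2 := by
    intro i
    have h : f i - b = (f i - c) + (c - b) := by abel
    rw [h, @norm_add_sq_real]
  have hsum_inner : ∑ i ∈ S, (inner ℝ (f i - c) (c - b) : ℝ) = -(S.card * ‖c - b‖^2) := by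
    rw [← sum_inner]
    have h1 : ∑ i ∈ S, (f i - c) = (S.card : ℝ) • (b - c) := by
      rw [Finset.sum_sub_distrib, ← hb, Finset.sum_const, smul_sub]
      congr 1
      exact (Nat.cast_smul_eq_nsmul ℝ _ _).symm
    rw [h1, real_inner_smul_left]
    have h2 : (inner ℝ (b - c) (c - b) : ℝ) = -‖c - b‖^2 := by
      rw [show b - c = -(c - b) by abel, inner_neg_left, real_inner_self_eq_norm_sq]
    rw [h2]; ring
  calc ∑ i ∈ S, ‖f i - b‖^2
      = ∑ i ∈ S, (‖f i - c‖^2 + 2 * (inner ℝ (f i - c) (c - b) : ℝ) + ‖c - b‖^2) := by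
        simp only [expand]
    _ = (∑ i ∈ S, ‖f i - c‖^2) + 2 * (∑ i ∈ S, (inner ℝ (f i - c) (c - b) : ℝ))
        + S.card * ‖c - b‖^2 := by
        rw [Finset.sum_add_distrib, Finset.sum_add_distrib, ← Finset.mul_sum,
          Finset.sum_const, nsmul_eq_mul]
    _ = _ := by rw [hsum_inner]; ring

/-- The index set `I(j)` of the attraction set `A[xʲ]`: indices `i` such that the data
point `aⁱ` is closest to the centroid `xʲ` among all centroids. -/
noncomputable def attrIdx {n m k : ℕ} [NeZero k] (a : Fin m → EuclideanSpace ℝ (Fin n))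
    (x : Fin k → EuclideanSpace ℝ (Fin n)) (j : Fin k) : Finset (Fin m) :=
  Finset.univ.filter fun i =>
    ‖a i - x j‖ = Finset.univ.inf' Finset.univ_nonempty fun q => ‖a i - x q‖

/-- If the data points are pairwise distinct and `x̄` is a global solution of the
unconstrained MSSC problem, then every attraction set `A[x̄ʲ]` is nonempty and `x̄ʲ` is
the barycenter of its attraction set. -/
theorem stmt4 {n m k : ℕ} [NeZero k] (hk : k ≤ m)
    (a : Fin m → EuclideanSpace ℝ (Fin n)) (ha : Function.Injective a)
    (xbar : Fin k → EuclideanSpace ℝ (Fin n))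
    (hglob : ∀ x : Fin k → EuclideanSpace ℝ (Fin n), msscF a xbar ≤ msscF a x) :
    ∀ j : Fin k, (attrIdx a xbar j).Nonempty ∧
      xbar j = ((attrIdx a xbar j).card : ℝ)⁻¹ • ∑ i ∈ attrIdx a xbar j, a i := by
  classical
  have hk0 : 0 < k := Nat.pos_of_ne_zero (NeZero.ne k)
  have hm0 : 0 < m := lt_of_lt_of_le hk0 hk
  set G : (Fin k → EuclideanSpace ℝ (Fin n)) → Fin m → ℝ :=
    fun x i => Finset.univ.inf' Finset.univ_nonempty fun q => ‖a i - x q‖ ^ 2 with hGdef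
  -- global optimality in terms of sums
  have hsum : ∀ x, ∑ i, G xbar i ≤ ∑ i, G x i := by
    intro x
    have h := hglob x
    unfold msscF at h
    have hpos : (0:ℝ) < 1 / m := by positivity
    exact le_of_mul_le_mul_left h hpos
  -- G equals square of the inf' of norms
  have hGN : ∀ x i, G x i
      = (Finset.univ.inf' Finset.univ_nonempty fun q => ‖a i - x q‖) ^ 2 := by
    intro x i
    exact inf'_sq _ _ _ fun q _ => norm_nonneg _
  have hG_le : ∀ x i q, G x i ≤ ‖a i - x q‖ ^ 2 := by
    intro x i q
    exact Finset.inf'_le _ (Finset.mem_univ q)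
  -- if a i coincides with some centroid, i is in its attraction set
  have heq_mem : ∀ (i : Fin m) (q : Fin k), a i = xbar q → i ∈ attrIdx a xbar q := by
    intro i q hq
    rw [attrIdx, Finset.mem_filter]
    refine ⟨Finset.mem_univ _, ?_⟩
    have h0 : ‖a i - xbar q‖ = 0 := by rw [hq, sub_self, norm_zero]
    rw [h0]
    exact le_antisymm (Finset.le_inf' _ _ fun p _ => norm_nonneg _)
      (h0 ▸ Finset.inf'_le _ (Finset.mem_univ q))
  intro j
  -- a point not in the attraction set of j has its min attained elsewhere
  have hnotmem : ∀ i : Fin m, i ∉ attrIdx a xbar j →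
      ∃ q : Fin k, q ≠ j ∧ G xbar i = ‖a i - xbar q‖ ^ 2 := by
    intro i hi
    obtain ⟨q0, _, hq0⟩ :=
      Finset.exists_mem_eq_inf' (Finset.univ_nonempty) fun q => ‖a i - xbar q‖
    refine ⟨q0, ?_, by rw [hGN, hq0]⟩
    rintro rfl
    exact hi (Finset.mem_filter.2 ⟨Finset.mem_univ _, hq0.symm⟩)
  -- a point in the attraction set of j
  have hmem : ∀ i ∈ attrIdx a xbar j, G xbar i = ‖a i - xbar j‖ ^ 2 := by
    intro i hi
    rw [hGN]
    rw [attrIdx, Finset.mem_filter] at hi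
    rw [← hi.2]
  -- Part A: nonemptiness
  have hSne : (attrIdx a xbar j).Nonempty := by
    rw [Finset.nonempty_iff_ne_empty]
    intro hS
    have hnot : ∀ i : Fin m, i ∉ attrIdx a xbar j := by simp [hS]
    -- there is an uncovered data point
    have hcover : ∃ t : Fin m, ∀ q : Fin k, a t ≠ xbar q := by
      by_contra hcov
      push_neg at hcov
      have hmaps : ∀ i : Fin m, a i ∈ (Finset.univ.erase j).image xbar := by
        intro i
        obtain ⟨q, hq⟩ := hcov i
        have hqj : q ≠ j := by
          rintro rfl
          exact hnot i (heq_mem i q hq)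
        exact Finset.mem_image.2 ⟨q, Finset.mem_erase.2 ⟨hqj, Finset.mem_univ _⟩, hq.symm⟩
      have hle : (Finset.univ : Finset (Fin m)).card
          ≤ ((Finset.univ.erase j).image xbar).card :=
        Finset.card_le_card_of_injOn a (fun i _ => hmaps i) fun i _ i' _ h => ha h
      have h1 : ((Finset.univ.erase j).image xbar).card ≤ k - 1 := by
        calc ((Finset.univ.erase j).image xbar).card
            ≤ (Finset.univ.erase j).card := Finset.card_image_le
          _ = k - 1 := by rw [Finset.card_erase_of_mem (Finset.mem_univ j)]; simp
      rw [Finset.card_univ, Fintype.card_fin] at hle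
      omega
    obtain ⟨t, ht⟩ := hcover
    -- moving centroid j to a t strictly decreases the objective
    set x' := Function.update xbar j (a t) with hx'
    have hlt : ∑ i, G x' i < ∑ i, G xbar i := by
      refine Finset.sum_lt_sum (fun i _ => ?_) ⟨t, Finset.mem_univ t, ?_⟩
      · obtain ⟨q, hqj, hq⟩ := hnotmem i (hnot i)
        calc G x' i ≤ ‖a i - x' q‖ ^ 2 := hG_le x' i q
          _ = ‖a i - xbar q‖ ^ 2 := by rw [hx', Function.update_of_ne hqj]
          _ = G xbar i := hq.symm
      · have h1 : G x' t ≤ 0 := by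
          have := hG_le x' t j
          rw [hx', Function.update_self, sub_self, norm_zero] at this
          simpa using this
        have h2 : 0 < G xbar t := by
          obtain ⟨q, _, hq⟩ := hnotmem t (hnot t)
          rw [hq]
          exact pow_pos (norm_pos_iff.mpr (sub_ne_zero_of_ne (ht q))) 2
        linarith
    exact absurd (hsum x') (not_le.2 hlt)
  refine ⟨hSne, ?_⟩
  -- Part B: barycenter
  by_contra hne
  set S := attrIdx a xbar j with hSdef
  set b : EuclideanSpace ℝ (Fin n) := ((S.card : ℝ)⁻¹) • ∑ i ∈ S, a i with hbdef
  have hcard : (0:ℝ) < S.card := by exact_mod_cast Finset.card_pos.2 hSne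
  have hb : (S.card : ℝ) • b = ∑ i ∈ S, a i := by
    rw [hbdef, smul_inv_smul₀ hcard.ne']
  have hxb : xbar j ≠ b := hne
  set x' := Function.update xbar j b with hx'
  have key := sum_dist_sq_mean S a (xbar j) b hb
  have hnew_S : ∀ i ∈ S, G x' i ≤ ‖a i - b‖ ^ 2 := by
    intro i _
    have := hG_le x' i j
    rwa [hx', Function.update_self] at this
  have hnew_notS : ∀ i ∈ Sᶜ, G x' i ≤ G xbar i := by
    intro i hi
    obtain ⟨q, hqj, hq⟩ := hnotmem i (Finset.mem_compl.1 hi)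
    calc G x' i ≤ ‖a i - x' q‖ ^ 2 := hG_le x' i q
      _ = ‖a i - xbar q‖ ^ 2 := by rw [hx', Function.update_of_ne hqj]
      _ = G xbar i := hq.symm
  have hnormpos : 0 < ‖xbar j - b‖ ^ 2 := by
    exact pow_pos (norm_pos_iff.mpr (sub_ne_zero_of_ne hxb)) 2
  have hlt : ∑ i, G x' i < ∑ i, G xbar i := by
    calc ∑ i, G x' i = ∑ i ∈ S, G x' i + ∑ i ∈ Sᶜ, G x' i :=
          (Finset.sum_add_sum_compl S _).symm
      _ ≤ ∑ i ∈ S, ‖a i - b‖ ^ 2 + ∑ i ∈ Sᶜ, G xbar i := by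
          gcongr with i hi i hi
          · exact hnew_S i hi
          · exact hnew_notS i hi
      _ = (∑ i ∈ S, ‖a i - xbar j‖ ^ 2) - S.card * ‖xbar j - b‖ ^ 2
          + ∑ i ∈ Sᶜ, G xbar i := by rw [key]
      _ = (∑ i ∈ S, G xbar i) - S.card * ‖xbar j - b‖ ^ 2 + ∑ i ∈ Sᶜ, G xbar i := by
          rw [Finset.sum_congr rfl hmem]
      _ < ∑ i ∈ S, G xbar i + ∑ i ∈ Sᶜ, G xbar i := by nlinarith
      _ = ∑ i, G xbar i := Finset.sum_add_sum_compl S _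
  exact absurd (hsum x') (not_le.2 hlt)
end

section
/- If x̄ = (x̄¹,…,x̄ᵏ) is a global solution of the unconstrained MSSC problem with pairwise distinct data points a¹,…,aᵐ and k ≤ m, then the components of x̄ are pairwise distinct: x̄^{j₁} ≠ x̄^{j₂} whenever j₁ ≠ j₂. -/
/-- If the data points are pairwise distinct, `k ≤ m`, and `x̄` is a global solution of
the unconstrained MSSC problem, then the components of `x̄` are pairwise distinct. -/
theorem stmt5 {n m k : ℕ} [NeZero k] (hk : k ≤ m)
    (a : Fin m → EuclideanSpace ℝ (Fin n)) (ha : Function.Injective a)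
    (xbar : Fin k → EuclideanSpace ℝ (Fin n))
    (hglob : ∀ x : Fin k → EuclideanSpace ℝ (Fin n), msscF a xbar ≤ msscF a x) :
    ∀ j₁ j₂ : Fin k, j₁ ≠ j₂ → xbar j₁ ≠ xbar j₂ := by
  classical
  intro j₁ j₂ hj hx
  have hm : 0 < m := lt_of_lt_of_le (Nat.pos_of_ne_zero (NeZero.ne k)) hk
  -- xbar is not injective, so its image has fewer than k elements
  have hcard : (Finset.univ.image xbar).card < k := by
    rcases lt_or_eq_of_le (Finset.card_image_le (s := (Finset.univ : Finset (Fin k)))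
      (f := xbar)) with h | h
    · simpa using h
    · exfalso
      have hinj := Finset.injOn_of_card_image_eq h
      exact hj (hinj (Finset.mem_coe.2 (Finset.mem_univ j₁))
        (Finset.mem_coe.2 (Finset.mem_univ j₂)) hx)
  -- there is a data point not among the centers
  have hex : ∃ i₀ : Fin m, ∀ j, a i₀ ≠ xbar j := by
    by_contra hcon
    push_neg at hcon
    have hsub : (Finset.univ.image a) ⊆ (Finset.univ.image xbar) := by
      intro y hy
      simp only [Finset.mem_image, Finset.mem_univ, true_and] at hy ⊢
      obtain ⟨i, rfl⟩ := hy
      obtain ⟨j, hj'⟩ := hcon i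
      exact ⟨j, hj'.symm⟩
    have h1 : m ≤ (Finset.univ.image xbar).card := by
      have := Finset.card_le_card hsub
      rwa [Finset.card_image_of_injective _ ha, Finset.card_univ, Fintype.card_fin] at this
    omega
  obtain ⟨i₀, hi₀⟩ := hex
  -- the modified centers
  set x : Fin k → EuclideanSpace ℝ (Fin n) := fun j => if j = j₂ then a i₀ else xbar j with hxdef
  have hle : ∀ i : Fin m,
      (Finset.univ.inf' Finset.univ_nonempty fun j => ‖a i - x j‖ ^ 2) ≤
      (Finset.univ.inf' Finset.univ_nonempty fun j => ‖a i - xbar j‖ ^ 2) := by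
    intro i
    obtain ⟨j, -, hjeq⟩ := Finset.exists_mem_eq_inf' (Finset.univ_nonempty)
      (fun j => ‖a i - xbar j‖ ^ 2)
    rw [hjeq]
    by_cases hjc : j = j₂
    · have : x j₁ = xbar j := by
        simp [hxdef, hj, hx, hjc]
      calc Finset.univ.inf' Finset.univ_nonempty (fun j => ‖a i - x j‖ ^ 2)
          ≤ ‖a i - x j₁‖ ^ 2 := Finset.inf'_le _ (Finset.mem_univ j₁)
        _ = ‖a i - xbar j‖ ^ 2 := by rw [this]
    · have : x j = xbar j := by simp [hxdef, hjc]
      calc Finset.univ.inf' Finset.univ_nonempty (fun j => ‖a i - x j‖ ^ 2)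
          ≤ ‖a i - x j‖ ^ 2 := Finset.inf'_le _ (Finset.mem_univ j)
        _ = ‖a i - xbar j‖ ^ 2 := by rw [this]
  have hlt : (Finset.univ.inf' Finset.univ_nonempty fun j => ‖a i₀ - x j‖ ^ 2) <
      (Finset.univ.inf' Finset.univ_nonempty fun j => ‖a i₀ - xbar j‖ ^ 2) := by
    have h0 : (Finset.univ.inf' Finset.univ_nonempty fun j => ‖a i₀ - x j‖ ^ 2) ≤ 0 := by
      have : ‖a i₀ - x j₂‖ ^ 2 = 0 := by simp [hxdef]
      calc Finset.univ.inf' Finset.univ_nonempty (fun j => ‖a i₀ - x j‖ ^ 2)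
          ≤ ‖a i₀ - x j₂‖ ^ 2 := Finset.inf'_le _ (Finset.mem_univ j₂)
        _ = 0 := this
    have hpos : 0 < (Finset.univ.inf' Finset.univ_nonempty fun j => ‖a i₀ - xbar j‖ ^ 2) := by
      rw [Finset.lt_inf'_iff]
      intro j _
      have : a i₀ - xbar j ≠ 0 := sub_ne_zero_of_ne (hi₀ j)
      exact pow_pos (norm_pos_iff.2 this) 2
    exact lt_of_le_of_lt h0 hpos
  have hsum : (∑ i, Finset.univ.inf' Finset.univ_nonempty fun j => ‖a i - x j‖ ^ 2) <
      (∑ i, Finset.univ.inf' Finset.univ_nonempty fun j => ‖a i - xbar j‖ ^ 2) :=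
    Finset.sum_lt_sum (fun i _ => hle i) ⟨i₀, Finset.mem_univ i₀, hlt⟩
  have : msscF a x < msscF a xbar := by
    unfold msscF
    apply mul_lt_mul_of_pos_left hsum
    positivity
  exact absurd (hglob x) (not_le.2 this)
end

section
/- Let a ∈ Y₁ and let c(a) be the barycenter of the nonempty set A₁(a) = {aⁱ : ‖a−aⁱ‖² < dₗ(aⁱ)}. Then g(c(a)) ≤ g(a); consequently g(c(a)) < (1/m)∑_i dₗ(aⁱ) and hence c(a) ∈ Y₁. -/
open Finset

lemma centroid_min {ι E : Type*} [NormedAddCommGroup E] [InnerProductSpace ℝ E]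
    (s : Finset ι) (hs : s.Nonempty) (a : ι → E) (y : E) :
    ∑ i ∈ s, ‖(s.card : ℝ)⁻¹ • (∑ j ∈ s, a j) - a i‖ ^ 2 ≤ ∑ i ∈ s, ‖y - a i‖ ^ 2 := by
  set c : E := (s.card : ℝ)⁻¹ • (∑ j ∈ s, a j) with hcdef
  have hcard : (s.card : ℝ) ≠ 0 :=
    Nat.cast_ne_zero.mpr (Finset.card_pos.mpr hs).ne'
  have hsum : ∑ j ∈ s, a j = (s.card : ℝ) • c := by
    rw [hcdef, smul_smul, mul_inv_cancel₀ hcard, one_smul]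
  have e1 : ∀ z : E, ∑ i ∈ s, ‖z - a i‖ ^ 2
      = (s.card : ℝ) * ‖z‖ ^ 2 - 2 * inner ℝ z (∑ j ∈ s, a j) + ∑ i ∈ s, ‖a i‖ ^ 2 := by
    intro z
    simp_rw [norm_sub_sq_real, inner_sum]
    rw [Finset.sum_add_distrib, Finset.sum_sub_distrib, Finset.sum_const, nsmul_eq_mul,
      Finset.mul_sum]
  have hin1 : (inner ℝ y (∑ j ∈ s, a j) : ℝ) = (s.card : ℝ) * inner ℝ y c := by
    rw [hsum, real_inner_smul_right]
  have hin2 : (inner ℝ c (∑ j ∈ s, a j) : ℝ) = (s.card : ℝ) * ‖c‖ ^ 2 := by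
    rw [hsum, real_inner_smul_right, real_inner_self_eq_norm_sq]
  have key : ∑ i ∈ s, ‖y - a i‖ ^ 2 - ∑ i ∈ s, ‖c - a i‖ ^ 2 = (s.card : ℝ) * ‖y - c‖ ^ 2 := by
    rw [e1 y, e1 c, hin1, hin2, norm_sub_sq_real]
    ring
  nlinarith [mul_nonneg (le_of_lt (by exact_mod_cast Finset.card_pos.mpr hs :
    (0:ℝ) < s.card)) (sq_nonneg ‖y - c‖)]

/-- Let `y₀ ∈ Y₁` and let `c` be the barycenter of the nonempty set
`A₁(y₀) = {aⁱ : ‖y₀−aⁱ‖² < dₗ(aⁱ)}`. Then `g(c) ≤ g(y₀)`; consequently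
`g(c) < (1/m) ∑ᵢ dₗ(aⁱ)` and `c ∈ Y₁`. -/
theorem stmt15 {n m : ℕ} (a : Fin m → EuclideanSpace ℝ (Fin n))
    (d : Fin m → ℝ) (hd : ∀ i, 0 ≤ d i)
    (g : EuclideanSpace ℝ (Fin n) → ℝ)
    (hg : ∀ y, g y = (1 / (m : ℝ)) * ∑ i, min (d i) (‖y - a i‖ ^ 2))
    (y₀ : EuclideanSpace ℝ (Fin n)) (hy₀ : ∃ i, ‖y₀ - a i‖ ^ 2 < d i)
    (c : EuclideanSpace ℝ (Fin n))
    (hc : c = (((Finset.univ.filter fun i => ‖y₀ - a i‖ ^ 2 < d i).card : ℝ))⁻¹ •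
      ∑ i ∈ Finset.univ.filter fun i => ‖y₀ - a i‖ ^ 2 < d i, a i) :
    g c ≤ g y₀ ∧ g c < (1 / (m : ℝ)) * ∑ i, d i ∧ ∃ i, ‖c - a i‖ ^ 2 < d i := by
  obtain ⟨i₀, hi₀⟩ := hy₀
  have hm : 0 < m := i₀.pos
  have hminv : 0 < (1 / (m : ℝ)) := by positivity
  set S : Finset (Fin m) := Finset.univ.filter fun i => ‖y₀ - a i‖ ^ 2 < d i with hS
  have hSne : S.Nonempty := ⟨i₀, by simp [hS, hi₀]⟩
  have hcent : ∑ i ∈ S, ‖c - a i‖ ^ 2 ≤ ∑ i ∈ S, ‖y₀ - a i‖ ^ 2 := by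
    rw [hc]; exact centroid_min S hSne a y₀
  -- g c ≤ g y₀
  have hsum_le : ∑ i, min (d i) (‖c - a i‖ ^ 2) ≤ ∑ i, min (d i) (‖y₀ - a i‖ ^ 2) := by
    rw [← Finset.sum_filter_add_sum_filter_not Finset.univ (fun i => ‖y₀ - a i‖ ^ 2 < d i),
        ← Finset.sum_filter_add_sum_filter_not Finset.univ (fun i => ‖y₀ - a i‖ ^ 2 < d i)]
    gcongr ?_ + ?_ with i hi i hi
    · calc ∑ i ∈ S, min (d i) (‖c - a i‖ ^ 2) ≤ ∑ i ∈ S, ‖c - a i‖ ^ 2 :=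
            Finset.sum_le_sum fun i _ => min_le_right _ _
        _ ≤ ∑ i ∈ S, ‖y₀ - a i‖ ^ 2 := hcent
        _ = ∑ i ∈ S, min (d i) (‖y₀ - a i‖ ^ 2) := by
            refine Finset.sum_congr rfl fun i hi => ?_
            rw [hS, Finset.mem_filter] at hi
            rw [min_eq_right hi.2.le]
    · refine Finset.sum_le_sum fun i hi => ?_
      rw [Finset.mem_filter, not_lt] at hi
      rw [min_eq_left hi.2]
      exact min_le_left _ _
  have h1 : g c ≤ g y₀ := by
    rw [hg, hg]
    exact mul_le_mul_of_nonneg_left hsum_le hminv.le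
  have h2 : g y₀ < (1 / (m : ℝ)) * ∑ i, d i := by
    rw [hg]
    refine mul_lt_mul_of_pos_left ?_ hminv
    refine Finset.sum_lt_sum (fun i _ => min_le_left _ _) ⟨i₀, Finset.mem_univ _, ?_⟩
    rw [min_eq_right hi₀.le]; exact hi₀
  refine ⟨h1, h1.trans_lt h2, ?_⟩
  by_contra h
  push_neg at h
  have : g c = (1 / (m : ℝ)) * ∑ i, d i := by
    rw [hg]
    congr 1
    exact Finset.sum_congr rfl fun i _ => min_eq_left (h i)
  exact absurd (h1.trans_lt h2) (by rw [this]; exact lt_irrefl _)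
end
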